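/- Let T be a rigid essentially small monoidal triangulated category (every object is left or right dualisable) whose spectrum Spc(T) is noetherian. Then the assignment Y ↦ T_Y = {t ∈ T : supp(t) ⊆ Y} is an inclusion-preserving bijection from the collection of all Thomason subsets of Spc(T) to the collection of ALL thick two-sided tensor ideals of T, with inverse J ↦ supp(J). -/

import Mathlib

open CategoryTheory CategoryTheory.Limits CategoryTheory.Pretriangulated
  CategoryTheory.MonoidalCategory TopologicalSpace ZeroObject

universe v u

variable (C : Type u) [Category.{v} C] [HasZeroObject C] [Preadditive C]
  [HasShift C ℤ] [∀ n : ℤ, (shiftFunctor C n).Additive] [Pretriangulated C]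
  [HasBinaryBiproducts C] [MonoidalCategory C] [EssentiallySmall.{v} C]
  [∀ X : C, (tensorLeft X).CommShift ℤ] [∀ X : C, (tensorRight X).CommShift ℤ]
  [∀ X : C, (tensorLeft X).IsTriangulated] [∀ X : C, (tensorRight X).IsTriangulated]

/-- A thick two-sided tensor ideal of a monoidal triangulated category:
a thick (triangulated, closed under direct summands) subcategory, closed under
left and right tensoring by arbitrary objects. -/
structure ThickIdeal : Type (max u v) where
  carrier : Set C
  zero_mem : (0 : C) ∈ carrier
  iso_closed : ∀ {a b : C}, (a ≅ b) → a ∈ carrier → b ∈ carrier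
  shift_mem : ∀ (a : C) (n : ℤ), a ∈ carrier → (a⟦n⟧ : C) ∈ carrier
  ext₂ : ∀ T : Triangle C, (T ∈ distTriang C) →
    T.obj₁ ∈ carrier → T.obj₃ ∈ carrier → T.obj₂ ∈ carrier
  summand_mem : ∀ a b : C, (a ⊞ b) ∈ carrier → a ∈ carrier
  tensor_left_mem : ∀ a x : C, a ∈ carrier → (x ⊗ a) ∈ carrier
  tensor_right_mem : ∀ a x : C, a ∈ carrier → (a ⊗ x) ∈ carrier

namespace ThickIdeal

variable {C}

/-- A thick two-sided ideal is proper if it is not all of `C`. -/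
def IsProper (P : ThickIdeal C) : Prop := P.carrier ≠ Set.univ

/-- A prime ideal: a proper thick two-sided ideal `P` such that `I ⊗ J ⊆ P`
implies `I ⊆ P` or `J ⊆ P` for all thick two-sided ideals `I`, `J`.
(Since `P` is a thick two-sided ideal, `I ⊗ J ⊆ P` is equivalent to all
elementwise tensor products lying in `P`.) -/
def IsPrime (P : ThickIdeal C) : Prop :=
  P.IsProper ∧ ∀ I J : ThickIdeal C,
    (∀ i ∈ I.carrier, ∀ j ∈ J.carrier, (i ⊗ j) ∈ P.carrier) →
      I.carrier ⊆ P.carrier ∨ J.carrier ⊆ P.carrier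

/-- A semiprime ideal: an intersection of prime ideals. -/
def IsSemiprime (J : ThickIdeal C) : Prop :=
  ∃ S : Set (ThickIdeal C), (∀ P ∈ S, P.IsPrime) ∧
    J.carrier = ⋂ P ∈ S, P.carrier

end ThickIdeal

/-- The noncommutative Balmer spectrum: the set of prime thick two-sided ideals. -/
def Spc : Type (max u v) := {P : ThickIdeal C // P.IsPrime}

/-- The topology on `Spc C` generated by declaring the sets
`V(S) = {P : P ∩ S = ∅}` to be closed, i.e. their complements
`U(S) = {P : P ∩ S ≠ ∅}` to be open. -/
instance : TopologicalSpace (Spc C) :=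
  generateFrom
    {U : Set (Spc C) | ∃ S : Set C, U = {P : Spc C | (P.1.carrier ∩ S).Nonempty}}

/-- The small noncommutative support of an object. -/
def supp (t : C) : Set (Spc C) := {P : Spc C | t ∉ P.1.carrier}

/-- The support of a collection of objects. -/
def suppSet (E : Set C) : Set (Spc C) := ⋃ t ∈ E, supp C t

/-- A Thomason subset: a union of closed subsets with quasi-compact complements. -/
def IsThomason (Y : Set (Spc C)) : Prop :=
  ∃ 𝒴 : Set (Set (Spc C)), Y = ⋃₀ 𝒴 ∧ ∀ Z ∈ 𝒴, IsClosed Z ∧ IsCompact Zᶜ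

/-- A support datum on `C` with values in the topological space `X`. -/
structure SupportDatum (X : Type*) [TopologicalSpace X] where
  σ : C → Set X
  isClosed_σ : ∀ t : C, IsClosed (σ t)
  σ_zero : σ 0 = ∅
  σ_unit : σ (𝟙_ C) = Set.univ
  σ_sum : ∀ a b : C, σ (a ⊞ b) = σ a ∪ σ b
  σ_shift : ∀ a : C, σ (a⟦(1 : ℤ)⟧) = σ a
  σ_triangle : ∀ T : Triangle C, (T ∈ distTriang C) →
    σ T.obj₁ ⊆ σ T.obj₂ ∪ σ T.obj₃
  σ_tensor : ∀ a b : C, (⋃ c : C, σ (a ⊗ c ⊗ b)) = σ a ∩ σ b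

/-- A specialisation closed subset: a union of closed subsets. -/
def IsSpecClosed {X : Type*} [TopologicalSpace X] (Y : Set X) : Prop :=
  ∃ 𝒴 : Set (Set X), Y = ⋃₀ 𝒴 ∧ ∀ Z ∈ 𝒴, IsClosed Z

/-- A classifying support datum: the space `X` is noetherian and spectral, and
`Θ(Y) = {t : σ(t) ⊆ Y}` is a bijection from specialisation closed subsets of `X`
to thick two-sided semiprime ideals of `C`, with inverse `J ↦ ⋃_{j ∈ J} σ(j)`. -/
structure ClassifyingSupportDatum (X : Type*) [TopologicalSpace X]
    extends SupportDatum C X where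
  noetherian : NoetherianSpace X
  compact : CompactSpace X
  t0 : T0Space X
  basis : IsTopologicalBasis {U : Set X | IsOpen U ∧ IsCompact U}
  qc_inter : ∀ U V : Set X, IsOpen U → IsCompact U → IsOpen V → IsCompact V →
    IsCompact (U ∩ V)
  sober : QuasiSober X
  theta_semiprime : ∀ Y : Set X, IsSpecClosed Y →
    ∃ J : ThickIdeal C, J.IsSemiprime ∧ J.carrier = {t : C | σ t ⊆ Y}
  theta_leftInv : ∀ Y : Set X, IsSpecClosed Y →
    (⋃ t ∈ {t : C | σ t ⊆ Y}, σ t) = Y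
  sigma_specClosed : ∀ J : ThickIdeal C, J.IsSemiprime →
    IsSpecClosed (⋃ j ∈ J.carrier, σ j)
  theta_rightInv : ∀ J : ThickIdeal C, J.IsSemiprime →
    {t : C | σ t ⊆ ⋃ j ∈ J.carrier, σ j} = J.carrier

/-- The alternating tensor product `r 0 ⊗ c 0 ⊗ r 1 ⊗ c 1 ⊗ ⋯ ⊗ c (n-1) ⊗ r n`. -/
def altTensor : ∀ (n : ℕ), (Fin (n + 1) → C) → (Fin n → C) → C
  | 0, r, _ => r 0
  | n + 1, r, c =>
      altTensor n (fun i => r i.castSucc) (fun i => c i.castSucc) ⊗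
        (c (Fin.last n) ⊗ r (Fin.last (n + 1)))

set_option linter.unusedSectionVars false

namespace ThickIdeal

variable {C}

lemma carrier_injective : Function.Injective (ThickIdeal.carrier (C := C)) := by
  intro I J h
  cases I; cases J; congr

lemma retract_mem (P : ThickIdeal C) {a m : C} (s : a ⟶ m) (r : m ⟶ a)
    (hsr : s ≫ r = 𝟙 a) (hm : m ∈ P.carrier) : a ∈ P.carrier := by
  obtain ⟨c, p, δ, hT⟩ := Pretriangulated.distinguished_cocone_triangle s
  have hmono : Mono ((shiftFunctor C (1 : ℤ)).map s) := by
    have : IsSplitMono ((shiftFunctor C (1 : ℤ)).map s) :=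
      IsSplitMono.mk' ⟨(shiftFunctor C (1 : ℤ)).map r, by
        rw [← Functor.map_comp, hsr]; simp⟩
    infer_instance
  have hδ : δ = 0 := by
    have h0 := Pretriangulated.comp_distTriang_mor_zero₃₁ _ hT
    rw [← cancel_mono ((shiftFunctor C (1 : ℤ)).map s), zero_comp]
    exact h0
  let φ : Triangle.mk s p δ ⟶ binaryBiproductTriangle a c :=
    { hom₁ := 𝟙 a
      hom₂ := (biprod.lift r p : m ⟶ a ⊞ c)
      hom₃ := 𝟙 c
      comm₁ := by
        have h12 : s ≫ p = 0 := Pretriangulated.comp_distTriang_mor_zero₁₂ _ hT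
        change s ≫ biprod.lift r p = 𝟙 a ≫ biprod.inl
        ext
        · simp [hsr]
        · simp [h12]
      comm₂ := by change p ≫ 𝟙 c = biprod.lift r p ≫ biprod.snd; simp
      comm₃ := by change δ ≫ (shiftFunctor C 1).map (𝟙 a) = 𝟙 c ≫ 0; simp [hδ] }
  have : IsIso φ.hom₂ := Pretriangulated.isIso₂_of_isIso₁₃ φ hT
    (Pretriangulated.binaryBiproductTriangle_distinguished a c)
    (by change IsIso (𝟙 a); infer_instance) (by change IsIso (𝟙 c); infer_instance)
  exact P.summand_mem a c (P.iso_closed (@asIso _ _ _ _ φ.hom₂ this) hm)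

lemma summand_mem' (P : ThickIdeal C) (a b : C) (h : (a ⊞ b) ∈ P.carrier) :
    b ∈ P.carrier :=
  P.retract_mem biprod.inr biprod.snd (by simp) h

lemma biprod_mem_iff (P : ThickIdeal C) (a b : C) :
    (a ⊞ b) ∈ P.carrier ↔ a ∈ P.carrier ∧ b ∈ P.carrier := by
  constructor
  · exact fun h => ⟨P.summand_mem a b h, P.summand_mem' a b h⟩
  · rintro ⟨ha, hb⟩
    exact P.ext₂ _ (Pretriangulated.binaryBiproductTriangle_distinguished a b) ha hb

lemma eq_univ_of_one_mem (P : ThickIdeal C) (h : (𝟙_ C) ∈ P.carrier) :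
    P.carrier = Set.univ := by
  ext x
  simp only [Set.mem_univ, iff_true]
  exact P.iso_closed (ρ_ x) (P.tensor_left_mem _ x h)

lemma one_not_mem {P : ThickIdeal C} (h : P.IsProper) : (𝟙_ C) ∉ P.carrier :=
  fun hm => h (P.eq_univ_of_one_mem hm)

end ThickIdeal

namespace ThickIdeal

variable {C}

section Preimage

variable (P : ThickIdeal C) (F : C ⥤ C) [F.CommShift ℤ] [F.IsTriangulated]

lemma obj_zero_mem : F.obj 0 ∈ P.carrier :=
  P.iso_closed F.mapZeroObject.symm P.zero_mem

lemma obj_shift_mem (x : C) (n : ℤ) (h : F.obj x ∈ P.carrier) :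
    F.obj (x⟦n⟧) ∈ P.carrier :=
  P.iso_closed ((F.commShiftIso n).symm.app x) (P.shift_mem _ n h)

lemma obj_ext₂ (T : Triangle C) (hT : T ∈ distTriang C)
    (h₁ : F.obj T.obj₁ ∈ P.carrier) (h₃ : F.obj T.obj₃ ∈ P.carrier) :
    F.obj T.obj₂ ∈ P.carrier :=
  P.ext₂ (F.mapTriangle.obj T) (F.map_distinguished T hT) h₁ h₃

lemma obj_summand_mem (a b : C) (h : F.obj (a ⊞ b) ∈ P.carrier) :
    F.obj a ∈ P.carrier :=
  P.retract_mem (F.map biprod.inl) (F.map biprod.fst)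
    (by rw [← F.map_comp]; simp) h

end Preimage

/-- The thick two-sided ideal generated by a set. -/
def span (s : Set C) : ThickIdeal C where
  carrier := {x | ∀ I : ThickIdeal C, s ⊆ I.carrier → x ∈ I.carrier}
  zero_mem := fun I _ => I.zero_mem
  iso_closed := fun e h I hI => I.iso_closed e (h I hI)
  shift_mem := fun a n h I hI => I.shift_mem a n (h I hI)
  ext₂ := fun T hT h₁ h₃ I hI => I.ext₂ T hT (h₁ I hI) (h₃ I hI)
  summand_mem := fun a b h I hI => I.summand_mem a b (h I hI)
  tensor_left_mem := fun a x h I hI => I.tensor_left_mem a x (h I hI)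
  tensor_right_mem := fun a x h I hI => I.tensor_right_mem a x (h I hI)

lemma subset_span (s : Set C) : s ⊆ (span s).carrier :=
  fun _ hx I hI => hI hx

lemma span_le {s : Set C} {I : ThickIdeal C} (h : s ⊆ I.carrier) :
    (span s).carrier ⊆ I.carrier :=
  fun _ hx => hx I h

/-- `{j | ∀ c, t ⊗ (c ⊗ j) ∈ P}` is a thick two-sided ideal. -/
def lKer (t : C) (P : ThickIdeal C) : ThickIdeal C where
  carrier := {j | ∀ c : C, (t ⊗ (c ⊗ j)) ∈ P.carrier}
  zero_mem := fun c => P.obj_zero_mem (tensorLeft c ⋙ tensorLeft t)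
  iso_closed := fun e h c =>
    P.iso_closed ((tensorLeft c ⋙ tensorLeft t).mapIso e) (h c)
  shift_mem := fun a n h c =>
    P.obj_shift_mem (tensorLeft c ⋙ tensorLeft t) a n (h c)
  ext₂ := fun T hT h₁ h₃ c =>
    P.obj_ext₂ (tensorLeft c ⋙ tensorLeft t) T hT (h₁ c) (h₃ c)
  summand_mem := fun a b h c =>
    P.obj_summand_mem (tensorLeft c ⋙ tensorLeft t) a b (h c)
  tensor_left_mem := fun a x h c =>
    P.iso_closed ((tensorLeft t).mapIso (α_ c x a)) (h (c ⊗ x))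
  tensor_right_mem := fun a x h c => by
    have h1 : ((t ⊗ (c ⊗ a)) ⊗ x) ∈ P.carrier :=
      P.tensor_right_mem _ x (h c)
    exact P.iso_closed ((α_ t (c ⊗ a) x) ≪≫ (tensorLeft t).mapIso (α_ c a x)) h1

/-- `{x | ∀ c, x ⊗ (c ⊗ t) ∈ P}` is a thick two-sided ideal. -/
def rKer (t : C) (P : ThickIdeal C) : ThickIdeal C where
  carrier := {x | ∀ c : C, (x ⊗ (c ⊗ t)) ∈ P.carrier}
  zero_mem := fun c => P.obj_zero_mem (tensorRight (c ⊗ t))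
  iso_closed := fun e h c =>
    P.iso_closed ((tensorRight (c ⊗ t)).mapIso e) (h c)
  shift_mem := fun a n h c =>
    P.obj_shift_mem (tensorRight (c ⊗ t)) a n (h c)
  ext₂ := fun T hT h₁ h₃ c =>
    P.obj_ext₂ (tensorRight (c ⊗ t)) T hT (h₁ c) (h₃ c)
  summand_mem := fun a b h c =>
    P.obj_summand_mem (tensorRight (c ⊗ t)) a b (h c)
  tensor_left_mem := fun a y h c =>
    P.iso_closed (α_ y a (c ⊗ t)).symm (P.tensor_left_mem _ y (h c))
  tensor_right_mem := fun a y h c =>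
    P.iso_closed (((tensorLeft a).mapIso (α_ y c t)) ≪≫ (α_ a y (c ⊗ t)).symm)
      (h (y ⊗ c))

/-- `{i | ∀ j ∈ S, i ⊗ j ∈ P}` is a thick two-sided ideal. -/
def lAnn (S P : ThickIdeal C) : ThickIdeal C where
  carrier := {i | ∀ j ∈ S.carrier, (i ⊗ j) ∈ P.carrier}
  zero_mem := fun j _ => P.obj_zero_mem (tensorRight j)
  iso_closed := fun e h j hj =>
    P.iso_closed ((tensorRight j).mapIso e) (h j hj)
  shift_mem := fun a n h j hj =>
    P.obj_shift_mem (tensorRight j) a n (h j hj)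
  ext₂ := fun T hT h₁ h₃ j hj =>
    P.obj_ext₂ (tensorRight j) T hT (h₁ j hj) (h₃ j hj)
  summand_mem := fun a b h j hj =>
    P.obj_summand_mem (tensorRight j) a b (h j hj)
  tensor_left_mem := fun a x h j hj =>
    P.iso_closed (α_ x a j).symm (P.tensor_left_mem _ x (h j hj))
  tensor_right_mem := fun a x h j hj =>
    P.iso_closed (α_ a x j).symm (h (x ⊗ j) (S.tensor_left_mem j x hj))

/-- The key elementwise multiplication lemma. -/
lemma elementwise_span (P : ThickIdeal C) {a b : C}
    (h : ∀ c : C, (a ⊗ (c ⊗ b)) ∈ P.carrier) :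
    ∀ i ∈ (span (P.carrier ∪ {a})).carrier,
      ∀ j ∈ (span (P.carrier ∪ {b})).carrier, (i ⊗ j) ∈ P.carrier := by
  have hKb : (span (P.carrier ∪ {b})).carrier ⊆ (lKer a P).carrier := by
    apply span_le
    rintro x (hx | hx)
    · exact fun c => P.tensor_left_mem _ a (P.tensor_left_mem x c hx)
    · obtain rfl : x = b := hx
      exact h
  have hLa : (span (P.carrier ∪ {a})).carrier ⊆
      (lAnn (span (P.carrier ∪ {b})) P).carrier := by
    apply span_le
    rintro x (hx | hx)
    · exact fun j _ => P.tensor_right_mem x j hx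
    · obtain rfl : x = a := hx
      intro j hj
      exact P.iso_closed ((tensorLeft x).mapIso (λ_ j)) (hKb hj (𝟙_ C))
  exact fun i hi j hj => hLa hi j hj

/-- In a prime ideal, two non-members can be multiplied (through some `c`)
to a non-member. -/
lemma exists_tensor_not_mem {P : ThickIdeal C} (hP : P.IsPrime) {a b : C}
    (ha : a ∉ P.carrier) (hb : b ∉ P.carrier) :
    ∃ c : C, (a ⊗ (c ⊗ b)) ∉ P.carrier := by
  by_contra hcon
  push_neg at hcon
  rcases hP.2 (span (P.carrier ∪ {a})) (span (P.carrier ∪ {b}))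
      (P.elementwise_span hcon) with hsub | hsub
  · exact ha (hsub (subset_span _ (Or.inr rfl)))
  · exact hb (hsub (subset_span _ (Or.inr rfl)))

end ThickIdeal

namespace ThickIdeal

variable {C}

/-- In a rigid category, every thick ideal satisfies the semiprimeness test. -/
lemma semiprime_cond (rigid : ∀ X : C, Nonempty (HasLeftDual X) ∨ Nonempty (HasRightDual X))
    (J : ThickIdeal C) (a : C) (h : ∀ c : C, (a ⊗ (c ⊗ a)) ∈ J.carrier) :
    a ∈ J.carrier := by
  rcases rigid a with ⟨⟨hL⟩⟩ | ⟨⟨hR⟩⟩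
  · letI := hL
    letI : ExactPairing (ᘁa) a := HasLeftDual.exact
    refine J.retract_mem ((ρ_ a).inv ≫ a ◁ (η_ (ᘁa) a))
      ((α_ a (ᘁa) a).inv ≫ (ε_ (ᘁa) a) ▷ a ≫ (λ_ a).hom) ?_ (h (ᘁa))
    slice_lhs 2 4 => rw [ExactPairing.coevaluation_evaluation]
    simp
  · letI := hR
    letI : ExactPairing a (aᘁ) := HasRightDual.exact
    refine J.retract_mem ((λ_ a).inv ≫ (η_ a (aᘁ)) ▷ a ≫ (α_ a (aᘁ) a).hom)
      (a ◁ (ε_ a (aᘁ)) ≫ (ρ_ a).hom) ?_ (h (aᘁ))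
    slice_lhs 2 4 => rw [ExactPairing.evaluation_coevaluation]
    simp

variable (J : ThickIdeal C)

/-- The step function for the m-sequence. -/
noncomputable def mStep (hJ : ∀ x : C, x ∉ J.carrier → ∃ c : C, (x ⊗ (c ⊗ x)) ∉ J.carrier)
    (x : {x : C // x ∉ J.carrier}) : {x : C // x ∉ J.carrier} :=
  ⟨x.1 ⊗ (Classical.choose (hJ x.1 x.2) ⊗ x.1), Classical.choose_spec (hJ x.1 x.2)⟩

lemma mStep_mem (hJ) (x : {x : C // x ∉ J.carrier}) (I : ThickIdeal C)
    (hx : x.1 ∈ I.carrier) : (J.mStep hJ x).1 ∈ I.carrier :=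
  I.tensor_left_mem _ _ (I.tensor_left_mem _ _ hx)

lemma mStep_sq (hJ) (x : {x : C // x ∉ J.carrier}) :
    ∃ c : C, (J.mStep hJ x).1 = x.1 ⊗ (c ⊗ x.1) :=
  ⟨_, rfl⟩

/-- Existence of a prime ideal containing `J` and avoiding `t`, given the
semiprimeness test for `J`. -/
lemma exists_prime (hJ : ∀ a : C, (∀ c : C, (a ⊗ (c ⊗ a)) ∈ J.carrier) → a ∈ J.carrier)
    {t : C} (ht : t ∉ J.carrier) :
    ∃ P : ThickIdeal C, P.IsPrime ∧ J.carrier ⊆ P.carrier ∧ t ∉ P.carrier := by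
  have hstep : ∀ x : C, x ∉ J.carrier → ∃ c : C, (x ⊗ (c ⊗ x)) ∉ J.carrier := by
    intro x hx
    by_contra hcon
    push_neg at hcon
    exact hx (hJ x hcon)
  -- the m-sequence
  set m : ℕ → {x : C // x ∉ J.carrier} := fun k => (J.mStep hstep)^[k] ⟨t, ht⟩ with hm
  have hm0 : (m 0).1 = t := rfl
  have hmsucc : ∀ k, m (k + 1) = J.mStep hstep (m k) := by
    intro k
    rw [hm]
    exact Function.iterate_succ_apply' _ _ _
  have hmono : ∀ (I : ThickIdeal C) (i j : ℕ), i ≤ j →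
      (m i).1 ∈ I.carrier → (m j).1 ∈ I.carrier := by
    intro I i j hij hi
    induction hij with
    | refl => exact hi
    | @step n hn ih =>
        rw [hmsucc n]
        exact J.mStep_mem hstep (m n) I ih
  -- Zorn's lemma
  set 𝒮 : Set (Set C) :=
    {A | (∃ I : ThickIdeal C, I.carrier = A) ∧ J.carrier ⊆ A ∧ ∀ k, (m k).1 ∉ A} with h𝒮
  have hJ𝒮 : J.carrier ∈ 𝒮 := ⟨⟨J, rfl⟩, subset_rfl, fun k => (m k).2⟩
  have hchainCond : ∀ c ⊆ 𝒮, IsChain (· ≤ ·) c → ∀ y ∈ c,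
      ∃ ub ∈ 𝒮, ∀ z ∈ c, z ≤ ub := by
    rintro c hc𝒮 hchain y hy
    have hIdeal : ∀ A ∈ c, ∃ I : ThickIdeal C, I.carrier = A := fun A hA => (hc𝒮 hA).1
    refine ⟨⋃₀ c, ⟨⟨⟨⋃₀ c, ?_, ?_, ?_, ?_, ?_, ?_, ?_⟩, rfl⟩, ?_, ?_⟩,
      fun z hz => Set.subset_sUnion_of_mem hz⟩
    · obtain ⟨I, hI⟩ := hIdeal y hy
      exact ⟨y, hy, hI ▸ I.zero_mem⟩
    · rintro a b e ⟨A, hA, ha⟩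
      obtain ⟨I, rfl⟩ := hIdeal A hA
      exact ⟨_, hA, I.iso_closed e ha⟩
    · rintro a n ⟨A, hA, ha⟩
      obtain ⟨I, rfl⟩ := hIdeal A hA
      exact ⟨_, hA, I.shift_mem a n ha⟩
    · rintro T hT ⟨A₁, hA₁, h₁⟩ ⟨A₃, hA₃, h₃⟩
      rcases eq_or_ne A₁ A₃ with rfl | hne
      · obtain ⟨I, rfl⟩ := hIdeal A₁ hA₁
        exact ⟨_, hA₁, I.ext₂ T hT h₁ h₃⟩
      · rcases hchain hA₁ hA₃ hne with hsub | hsub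
        · obtain ⟨I, rfl⟩ := hIdeal A₃ hA₃
          exact ⟨_, hA₃, I.ext₂ T hT (hsub h₁) h₃⟩
        · obtain ⟨I, rfl⟩ := hIdeal A₁ hA₁
          exact ⟨_, hA₁, I.ext₂ T hT h₁ (hsub h₃)⟩
    · rintro a b ⟨A, hA, ha⟩
      obtain ⟨I, rfl⟩ := hIdeal A hA
      exact ⟨_, hA, I.summand_mem a b ha⟩
    · rintro a x ⟨A, hA, ha⟩
      obtain ⟨I, rfl⟩ := hIdeal A hA
      exact ⟨_, hA, I.tensor_left_mem a x ha⟩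
    · rintro a x ⟨A, hA, ha⟩
      obtain ⟨I, rfl⟩ := hIdeal A hA
      exact ⟨_, hA, I.tensor_right_mem a x ha⟩
    · exact fun x hx => ⟨y, hy, (hc𝒮 hy).2.1 hx⟩
    · rintro k ⟨A, hA, ha⟩
      exact (hc𝒮 hA).2.2 k ha
  obtain ⟨M, hJM, hM𝒮, hMmax⟩ :
      ∃ M, J.carrier ⊆ M ∧ M ∈ 𝒮 ∧ ∀ A ∈ 𝒮, M ⊆ A → A ⊆ M := by
    obtain ⟨M, hle, hmax⟩ := zorn_le_nonempty₀ 𝒮 hchainCond J.carrier hJ𝒮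
    exact ⟨M, hle, hmax.1, fun A hA hMA => hmax.2 hA hMA⟩
  obtain ⟨⟨P, hPM⟩, hJsubM, havoidM⟩ := hM𝒮
  subst hPM
  have hprime : P.IsPrime := by
    constructor
    · intro huniv
      exact havoidM 0 (by rw [huniv]; trivial)
    · intro I₁ I₂ hprod
      by_contra hcon
      push_neg at hcon
      obtain ⟨hn1, hn2⟩ := hcon
      obtain ⟨a, haI, haP⟩ := Set.not_subset.mp hn1
      obtain ⟨b, hbI, hbP⟩ := Set.not_subset.mp hn2
      have hab : ∀ c' : C, (a ⊗ (c' ⊗ b)) ∈ P.carrier := fun c' =>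
        hprod a haI (c' ⊗ b) (I₂.tensor_left_mem b c' hbI)
      have hEW := P.elementwise_span hab
      have hka : ∃ k, (m k).1 ∈ (span (P.carrier ∪ {a})).carrier := by
        by_contra hconk
        push_neg at hconk
        have h𝒮a : (span (P.carrier ∪ {a})).carrier ∈ 𝒮 :=
          ⟨⟨_, rfl⟩, fun x hx => subset_span _ (Or.inl (hJsubM hx)), hconk⟩
        have hsub := hMmax _ h𝒮a (fun x hx => subset_span _ (Or.inl hx))
        exact haP (hsub (subset_span _ (Or.inr rfl)))
      have hkb : ∃ k, (m k).1 ∈ (span (P.carrier ∪ {b})).carrier := by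
        by_contra hconk
        push_neg at hconk
        have h𝒮b : (span (P.carrier ∪ {b})).carrier ∈ 𝒮 :=
          ⟨⟨_, rfl⟩, fun x hx => subset_span _ (Or.inl (hJsubM hx)), hconk⟩
        have hsub := hMmax _ h𝒮b (fun x hx => subset_span _ (Or.inl hx))
        exact hbP (hsub (subset_span _ (Or.inr rfl)))
      obtain ⟨k, hk⟩ := hka
      obtain ⟨k', hk'⟩ := hkb
      have hkey : ∀ c' : C, ((m k).1 ⊗ (c' ⊗ (m k').1)) ∈ P.carrier := fun c' =>
        hEW _ hk _ ((span (P.carrier ∪ {b})).tensor_left_mem _ c' hk')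
      rcases Nat.le_total k k' with hle | hle
      · have h1 : (m k).1 ∈ (rKer (m k').1 P).carrier := hkey
        have h2 : (m k').1 ∈ (rKer (m k').1 P).carrier := hmono _ k k' hle h1
        obtain ⟨c0, hc0⟩ := J.mStep_sq hstep (m k')
        refine havoidM (k' + 1) ?_
        rw [hmsucc k', hc0]
        exact h2 c0
      · have h1 : (m k').1 ∈ (lKer (m k).1 P).carrier := fun c' => hkey c'
        have h2 : (m k).1 ∈ (lKer (m k).1 P).carrier := hmono _ k' k hle h1
        obtain ⟨c0, hc0⟩ := J.mStep_sq hstep (m k)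
        refine havoidM (k + 1) ?_
        rw [hmsucc k, hc0]
        exact h2 c0
  exact ⟨P, hprime, hJsubM, hm0 ▸ havoidM 0⟩

end ThickIdeal

section Topology

variable {C}

/-- The basic closed subsets of the spectrum. -/
def Vset (S : Set C) : Set (Spc C) := {Q : Spc C | ∀ t ∈ S, t ∉ Q.1.carrier}

lemma isOpen_mem_carrier (t : C) : IsOpen {Q : Spc C | t ∈ Q.1.carrier} := by
  have h : {Q : Spc C | t ∈ Q.1.carrier} =
      {Q : Spc C | (Q.1.carrier ∩ {t}).Nonempty} := by
    ext Q
    simp [Set.inter_singleton_nonempty]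
  rw [h]
  exact isOpen_generateFrom_of_mem ⟨{t}, rfl⟩

lemma isClosed_Vset (S : Set C) : IsClosed (Vset S) := by
  rw [← isOpen_compl_iff]
  have h : (Vset S)ᶜ = ⋃ t ∈ S, {Q : Spc C | t ∈ Q.1.carrier} := by
    ext Q
    simp only [Vset, Set.mem_compl_iff, Set.mem_setOf_eq, Set.mem_iUnion]
    push_neg
    tauto
  rw [h]
  exact isOpen_biUnion fun t _ => isOpen_mem_carrier t

lemma supp_eq_Vset (t : C) : supp C t = Vset {t} := by
  ext Q
  simp [supp, Vset]

lemma isClosed_supp (t : C) : IsClosed (supp C t) := by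
  rw [supp_eq_Vset]
  exact isClosed_Vset _

lemma Vset_union (S₁ S₂ : Set C) :
    Vset S₁ ∪ Vset S₂ = Vset {x : C | ∃ a ∈ S₁, ∃ b ∈ S₂, x = (a ⊞ b)} := by
  ext Q
  constructor
  · rintro (h | h) x ⟨a, ha, b, hb, rfl⟩ hmem
    · exact h a ha ((Q.1.biprod_mem_iff a b).mp hmem).1
    · exact h b hb ((Q.1.biprod_mem_iff a b).mp hmem).2
  · intro h
    by_contra hcon
    rw [Set.mem_union] at hcon
    push_neg at hcon
    obtain ⟨h1, h2⟩ := hcon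
    simp only [Vset, Set.mem_setOf_eq, not_forall] at h1 h2
    obtain ⟨a, ha, ha'⟩ := h1
    obtain ⟨b, hb, hb'⟩ := h2
    push_neg at ha' hb'
    exact h (a ⊞ b) ⟨a, ha, b, hb, rfl⟩ ((Q.1.biprod_mem_iff a b).mpr ⟨ha', hb'⟩)

lemma exists_Vset_of_isClosed {Z : Set (Spc C)} (hZ : IsClosed Z) :
    ∃ S : Set C, Z = Vset S := by
  have key : ∀ U : Set (Spc C),
      GenerateOpen {U : Set (Spc C) | ∃ S : Set C,
        U = {P : Spc C | (P.1.carrier ∩ S).Nonempty}} U →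
      ∃ S : Set C, Uᶜ = Vset S := by
    intro U hU
    induction hU with
    | @basic U hU =>
        obtain ⟨S, rfl⟩ := hU
        refine ⟨S, ?_⟩
        ext Q
        simp only [Set.mem_compl_iff, Set.mem_setOf_eq, Vset, Set.inter_nonempty]
        push_neg
        tauto
    | univ =>
        refine ⟨{0}, ?_⟩
        ext Q
        simp only [Set.compl_univ, Set.mem_empty_iff_false, false_iff, Vset,
          Set.mem_setOf_eq, Set.mem_singleton_iff]
        push_neg
        exact ⟨0, rfl, Q.1.zero_mem⟩
    | @inter U₁ U₂ _ _ ih₁ ih₂ =>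
        obtain ⟨S₁, hS₁⟩ := ih₁
        obtain ⟨S₂, hS₂⟩ := ih₂
        refine ⟨{x : C | ∃ a ∈ S₁, ∃ b ∈ S₂, x = (a ⊞ b)}, ?_⟩
        rw [Set.compl_inter, hS₁, hS₂, Vset_union]
    | @sUnion K _ ih =>
        choose! f hf using ih
        refine ⟨⋃ U ∈ K, f U, ?_⟩
        ext Q
        simp only [Set.compl_sUnion, Set.mem_sInter, Set.mem_image, Vset,
          Set.mem_setOf_eq, Set.mem_iUnion]
        constructor
        · rintro h t ⟨U, hU, ht⟩
          have hQ : Q ∈ Uᶜ := h Uᶜ ⟨U, hU, rfl⟩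
          rw [hf U hU] at hQ
          exact hQ t ht
        · rintro h A ⟨U, hU, rfl⟩
          rw [hf U hU]
          exact fun t ht => h t ⟨U, hU, ht⟩
  have hopen : GenerateOpen _ Zᶜ := hZ.isOpen_compl
  obtain ⟨S, hS⟩ := key Zᶜ hopen
  exact ⟨S, by rw [← hS, compl_compl]⟩

lemma exists_list_of_compact {Z : Set (Spc C)} (hZc : IsClosed Z)
    (hc : IsCompact Zᶜ) :
    ∃ l : List C, ∀ Q : Spc C, Q ∈ Z ↔ ∀ x ∈ l, x ∉ Q.1.carrier := by
  obtain ⟨S, rfl⟩ := exists_Vset_of_isClosed hZc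
  have hcover : (Vset S)ᶜ ⊆ ⋃ t : S, {Q : Spc C | t.1 ∈ Q.1.carrier} := by
    intro Q hQ
    simp only [Set.mem_compl_iff, Vset, Set.mem_setOf_eq, not_forall] at hQ
    obtain ⟨t, ht, ht'⟩ := hQ
    push_neg at ht'
    exact Set.mem_iUnion.mpr ⟨⟨t, ht⟩, ht'⟩
  obtain ⟨fs, hfs⟩ := hc.elim_finite_subcover
    (fun t : S => {Q : Spc C | t.1 ∈ Q.1.carrier})
    (fun t => isOpen_mem_carrier t.1) hcover
  refine ⟨fs.toList.map Subtype.val, ?_⟩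
  intro Q
  constructor
  · intro hQ x hx
    simp only [List.mem_map, Finset.mem_toList] at hx
    obtain ⟨a, _, rfl⟩ := hx
    exact hQ a.1 a.2
  · intro h
    by_contra hQ
    have hmem := hfs hQ
    simp only [Set.mem_iUnion] at hmem
    obtain ⟨t, htfs, htQ⟩ := hmem
    exact h t.1 (by simp only [List.mem_map, Finset.mem_toList]; exact ⟨t, htfs, rfl⟩) htQ

lemma list_generator (Q : Spc C) : ∀ l : List C, (∀ x ∈ l, x ∉ Q.1.carrier) →
    ∃ u : C, u ∉ Q.1.carrier ∧
      ∀ R : Spc C, u ∉ R.1.carrier → ∀ x ∈ l, x ∉ R.1.carrier := by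
  intro l
  induction l with
  | nil =>
      exact fun _ => ⟨𝟙_ C, ThickIdeal.one_not_mem Q.2.1,
        fun R _ x hx => absurd hx List.not_mem_nil⟩
  | cons x l ih =>
      intro h
      obtain ⟨u', hu', hcov⟩ := ih fun y hy => h y (List.mem_cons_of_mem x hy)
      obtain ⟨c, hc⟩ := ThickIdeal.exists_tensor_not_mem Q.2
        (h x List.mem_cons_self) hu'
      refine ⟨x ⊗ (c ⊗ u'), hc, ?_⟩
      intro R hR y hy
      rcases List.mem_cons.mp hy with rfl | hy
      · exact fun hmem => hR (R.1.tensor_right_mem y (c ⊗ u') hmem)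
      · refine hcov R ?_ y hy
        exact fun hmem => hR (R.1.tensor_left_mem _ x (R.1.tensor_left_mem u' c hmem))

end Topology

section Main

variable {C}

/-- The thick two-sided ideal of objects supported in `Y`. -/
def suppIdeal (Y : Set (Spc C)) : ThickIdeal C where
  carrier := {t : C | supp C t ⊆ Y}
  zero_mem := fun Q hQ => absurd Q.1.zero_mem hQ
  iso_closed := fun e h Q hQ => h fun ha => hQ (Q.1.iso_closed e ha)
  shift_mem := fun a n h Q hQ => h fun ha => hQ (Q.1.shift_mem a n ha)
  ext₂ := fun T hT h₁ h₃ Q hQ => by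
    by_cases hm : T.obj₁ ∈ Q.1.carrier
    · by_cases hm3 : T.obj₃ ∈ Q.1.carrier
      · exact absurd (Q.1.ext₂ T hT hm hm3) hQ
      · exact h₃ hm3
    · exact h₁ hm
  summand_mem := fun a b h Q hQ => h fun hab => hQ (Q.1.summand_mem a b hab)
  tensor_left_mem := fun a x h Q hQ => h fun ha => hQ (Q.1.tensor_left_mem a x ha)
  tensor_right_mem := fun a x h Q hQ => h fun ha => hQ (Q.1.tensor_right_mem a x ha)

lemma suppSet_suppIdeal {Y : Set (Spc C)} (hY : IsThomason C Y) :
    suppSet C (suppIdeal Y).carrier = Y := by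
  apply subset_antisymm
  · intro Q hQ
    obtain ⟨t, ht, hQt⟩ := Set.mem_iUnion₂.mp hQ
    exact ht hQt
  · intro Q hQ
    obtain ⟨𝒴, rfl, h𝒴⟩ := hY
    obtain ⟨Z, hZ𝒴, hQZ⟩ := hQ
    obtain ⟨hZc, hZcc⟩ := h𝒴 Z hZ𝒴
    obtain ⟨l, hl⟩ := exists_list_of_compact hZc hZcc
    obtain ⟨u, huQ, hcov⟩ := list_generator Q l ((hl Q).mp hQZ)
    have hu : supp C u ⊆ ⋃₀ 𝒴 := fun R hR => ⟨Z, hZ𝒴, (hl R).mpr (hcov R hR)⟩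
    exact Set.mem_biUnion hu huQ

lemma suppIdeal_suppSet
    (rigid : ∀ X : C, Nonempty (HasLeftDual X) ∨ Nonempty (HasRightDual X))
    (J : ThickIdeal C) :
    (suppIdeal (suppSet C J.carrier)).carrier = J.carrier := by
  apply subset_antisymm
  · intro t ht
    by_contra htJ
    obtain ⟨P, hP, hJP, htP⟩ :=
      J.exists_prime (fun a h => ThickIdeal.semiprime_cond rigid J a h) htJ
    have hQ : (⟨P, hP⟩ : Spc C) ∈ supp C t := htP
    obtain ⟨j, hjJ, hjP⟩ := Set.mem_iUnion₂.mp (ht hQ)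
    exact hjP (hJP hjJ)
  · intro t ht
    exact Set.subset_biUnion_of_mem ht

lemma isThomason_suppSet [NoetherianSpace (Spc C)] (E : Set C) :
    IsThomason C (suppSet C E) := by
  refine ⟨(fun t => supp C t) '' E, by rw [Set.sUnion_image]; rfl, ?_⟩
  rintro Z ⟨t, _, rfl⟩
  exact ⟨isClosed_supp t, NoetherianSpace.isCompact _⟩

end Main

/-- If `C` is rigid (every object left or right dualisable) and `Spc C` is
noetherian, then `Y ↦ T_Y` is an inclusion-preserving bijection from Thomason
subsets of `Spc C` to ALL thick two-sided tensor ideals of `C`, with inverse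
`J ↦ supp J`. -/
theorem statement11 (noeth : NoetherianSpace (Spc C))
    (rigid : ∀ X : C, Nonempty (HasLeftDual X) ∨ Nonempty (HasRightDual X)) :
    ∃ e : {Y : Set (Spc C) // IsThomason C Y} ≃ ThickIdeal C,
      (∀ Y₁ Y₂ : {Y : Set (Spc C) // IsThomason C Y},
        Y₁.1 ⊆ Y₂.1 ↔ (e Y₁).carrier ⊆ (e Y₂).carrier) ∧
      (∀ Y : {Y : Set (Spc C) // IsThomason C Y},
        (e Y).carrier = {t : C | supp C t ⊆ Y.1}) ∧
      (∀ J : ThickIdeal C, (e.symm J).1 = suppSet C J.carrier) := by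
  haveI := noeth
  refine ⟨{ toFun := fun Y => suppIdeal Y.1
            invFun := fun J => ⟨suppSet C J.carrier, isThomason_suppSet _⟩
            left_inv := fun Y => Subtype.ext (suppSet_suppIdeal Y.2)
            right_inv := fun J =>
              ThickIdeal.carrier_injective (suppIdeal_suppSet rigid J) },
    ?_, fun Y => rfl, fun J => rfl⟩
  intro Y₁ Y₂
  constructor
  · exact fun h t ht => Set.Subset.trans ht h
  · intro h
    calc Y₁.1 = suppSet C (suppIdeal Y₁.1).carrier := (suppSet_suppIdeal Y₁.2).symm
      _ ⊆ suppSet C (suppIdeal Y₂.1).carrier := Set.biUnion_subset_biUnion_left h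
      _ = Y₂.1 := suppSet_suppIdeal Y₂.2
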